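/- Let N ≥ 1, let r ∈ ℝ^N (Euclidean space with the standard inner product ⟪·,·⟫) with r ≠ 0, and let f : ℝ^N → ℝ be differentiable at r with gradient K := ∇f(r). Assume the Euler identity f(r) = ⟪K, r⟫. Then the gradient at r of the 1-normalized functional S₁(x) = f(x)/‖x‖ vanishes if and only if there exists λ ∈ ℝ with K = λ • r; in this case necessarily λ = f(r)/‖r‖². -/

import Mathlib

open scoped RealInnerProductSpace

/-- Critical points of the 1-normalized total curvature functional `S₁(x) = f x / ‖x‖`
are exactly the discrete quasi-Einstein metrics `K = λ • r`, and then necessarily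
`λ = f r / ‖r‖²`. -/
theorem stmt_0 {N : ℕ} (hN : 1 ≤ N) (r : EuclideanSpace ℝ (Fin N)) (hr : r ≠ 0)
    (f : EuclideanSpace ℝ (Fin N) → ℝ) (hf : DifferentiableAt ℝ f r)
    (K : EuclideanSpace ℝ (Fin N)) (hK : K = gradient f r)
    (euler : f r = ⟪K, r⟫) :
    (gradient (fun x => f x / ‖x‖) r = 0 ↔ ∃ l : ℝ, K = l • r) ∧
      (∀ l : ℝ, K = l • r → l = f r / ‖r‖ ^ 2) := by
  have hrn : ‖r‖ ≠ 0 := norm_ne_zero_iff.mpr hr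
  -- derivative of the norm
  have hsq : HasFDerivAt (fun x : EuclideanSpace ℝ (Fin N) => ‖x‖ ^ 2) (2 • (innerSL ℝ r)) r := by
    simpa using (hasFDerivAt_id r).norm_sq
  have hnorm : HasFDerivAt (fun x : EuclideanSpace ℝ (Fin N) => ‖x‖) (‖r‖⁻¹ • innerSL ℝ r) r := by
    have h1 : HasFDerivAt (fun x : EuclideanSpace ℝ (Fin N) => Real.sqrt (‖x‖ ^ 2))
        ((1 / (2 * Real.sqrt (‖r‖ ^ 2))) • (2 • (innerSL ℝ r))) r :=
      hsq.sqrt (pow_ne_zero 2 hrn)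
    have e1 : (fun x : EuclideanSpace ℝ (Fin N) => Real.sqrt (‖x‖ ^ 2)) = fun x : EuclideanSpace ℝ (Fin N) => ‖x‖ := by
      funext x; rw [Real.sqrt_sq (norm_nonneg x)]
    have e2 : ((1 / (2 * Real.sqrt (‖r‖ ^ 2))) • (2 • (innerSL ℝ r)))
        = ‖r‖⁻¹ • innerSL ℝ r := by
      rw [Real.sqrt_sq (norm_nonneg r)]
      ext y
      simp
      ring
    rw [e1, e2] at h1; exact h1
  have hinv : HasFDerivAt (fun x : EuclideanSpace ℝ (Fin N) => (‖x‖)⁻¹)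
      ((-((‖r‖ ^ 2)⁻¹)) • (‖r‖⁻¹ • innerSL ℝ r)) r :=
    (hasDerivAt_inv hrn).comp_hasFDerivAt r hnorm
  have hKg : HasGradientAt f K r := hK ▸ hf.hasGradientAt
  have hF : HasFDerivAt f (innerSL ℝ K) r := hKg.hasFDerivAt
  have hmul : HasFDerivAt (fun x : EuclideanSpace ℝ (Fin N) => f x * (‖x‖)⁻¹)
      ((f r) • ((-((‖r‖ ^ 2)⁻¹)) • (‖r‖⁻¹ • innerSL ℝ r)) + (‖r‖)⁻¹ • (innerSL ℝ K)) r :=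
    hF.mul hinv
  set G : EuclideanSpace ℝ (Fin N) := ‖r‖⁻¹ • K - (f r / ‖r‖ ^ 3) • r with hG
  have hgrad : HasGradientAt (fun x : EuclideanSpace ℝ (Fin N) => f x / ‖x‖) G r := by
    rw [hasGradientAt_iff_hasFDerivAt]
    have : (fun x : EuclideanSpace ℝ (Fin N) => f x / ‖x‖) = fun x : EuclideanSpace ℝ (Fin N) => f x * (‖x‖)⁻¹ := by
      funext x; rw [div_eq_mul_inv]
    rw [this]
    refine HasFDerivAt.congr_fderiv hmul ?_
    ext y
    simp [InnerProductSpace.toDual, hG, inner_sub_left, inner_smul_left]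
    field_simp
    ring
  have hgradeq : gradient (fun x => f x / ‖x‖) r = G := hgrad.gradient
  have part2 : ∀ l : ℝ, K = l • r → l = f r / ‖r‖ ^ 2 := by
    intro l hl
    have : f r = l * ‖r‖ ^ 2 := by
      rw [euler, hl, real_inner_smul_left, real_inner_self_eq_norm_sq]
    rw [this]; field_simp
  refine ⟨⟨fun h0 => ?_, fun ⟨l, hl⟩ => ?_⟩, part2⟩
  · refine ⟨f r / ‖r‖ ^ 2, ?_⟩
    rw [hgradeq] at h0
    have : ‖r‖⁻¹ • K = (f r / ‖r‖ ^ 3) • r := by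
      have := sub_eq_zero.mp (hG ▸ h0)
      exact this
    have := congrArg (fun v : EuclideanSpace ℝ (Fin N) => ‖r‖ • v) this
    simp only [smul_smul] at this
    rw [mul_inv_cancel₀ hrn, one_smul] at this
    rw [this]
    congr 1
    field_simp
  · have hlval : l = f r / ‖r‖ ^ 2 := part2 l hl
    rw [hgradeq, hG, hl, smul_smul, sub_eq_zero, hlval]
    congr 1
    rw [inv_mul_eq_div, div_div, ← pow_succ]
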